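/- With the construction below: if there exists an index j ∈ {1,…,n} with α_j = β_j = 1, then ED(x̃1 ∘ x̃2, ỹ) ≤ 9n − 3. -/

import Mathlib

open List

/-- The cost structure of the (removed) Mathlib `Levenshtein.Cost`. -/
structure Levenshtein.Cost (α β δ : Type*) where
  delete : α → δ
  insert : β → δ
  substitute : α → β → δ

/-- The (removed) Mathlib `Levenshtein.defaultCost`: unit costs. -/
def Levenshtein.defaultCost {α : Type*} [DecidableEq α] : Levenshtein.Cost α α ℕ where
  delete _ := 1
  insert _ := 1
  substitute a b := if a = b then 0 else 1

/-- The (removed) Mathlib `levenshtein`, by its defining recursion. -/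
def levenshtein {α β δ : Type*} [AddZeroClass δ] [Min δ] (C : Levenshtein.Cost α β δ) :
    List α → List β → δ
  | [], [] => 0
  | [], y :: ys => C.insert y + levenshtein C [] ys
  | x :: xs, [] => C.delete x + levenshtein C xs []
  | x :: xs, y :: ys =>
    min (C.delete x + levenshtein C xs (y :: ys))
      (min (C.insert y + levenshtein C (x :: xs) ys) (C.substitute x y + levenshtein C xs ys))

@[simp] theorem Levenshtein.defaultCost_delete {α : Type*} [DecidableEq α] (a : α) :
    (Levenshtein.defaultCost : Levenshtein.Cost α α ℕ).delete a = 1 := rfl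

@[simp] theorem Levenshtein.defaultCost_insert {α : Type*} [DecidableEq α] (a : α) :
    (Levenshtein.defaultCost : Levenshtein.Cost α α ℕ).insert a = 1 := rfl

@[simp] theorem Levenshtein.defaultCost_substitute {α : Type*} [DecidableEq α] (a b : α) :
    (Levenshtein.defaultCost : Levenshtein.Cost α α ℕ).substitute a b = if a = b then 0 else 1 :=
  rfl

@[simp] theorem levenshtein_nil_nil {α β δ : Type*} [AddZeroClass δ] [Min δ]
    (C : Levenshtein.Cost α β δ) : levenshtein C [] [] = 0 := by
  rw [levenshtein]

@[simp] theorem levenshtein_nil_cons {α β δ : Type*} [AddZeroClass δ] [Min δ]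
    (C : Levenshtein.Cost α β δ) (y : β) (ys : List β) :
    levenshtein C [] (y :: ys) = C.insert y + levenshtein C [] ys := by
  rw [levenshtein]

@[simp] theorem levenshtein_cons_nil {α β δ : Type*} [AddZeroClass δ] [Min δ]
    (C : Levenshtein.Cost α β δ) (x : α) (xs : List α) :
    levenshtein C (x :: xs) [] = C.delete x + levenshtein C xs [] := by
  rw [levenshtein]

theorem levenshtein_cons_cons {α β δ : Type*} [AddZeroClass δ] [Min δ]
    (C : Levenshtein.Cost α β δ) (x : α) (xs : List α) (y : β) (ys : List β) :
    levenshtein C (x :: xs) (y :: ys) =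
      min (C.delete x + levenshtein C xs (y :: ys))
        (min (C.insert y + levenshtein C (x :: xs) ys) (C.substitute x y + levenshtein C xs ys)) := by
  rw [levenshtein]

/-- Edit distance: minimum number of single-symbol insertions, deletions and
substitutions needed to transform `u` into `v` (Levenshtein distance with unit costs). -/
def ED {α : Type*} [DecidableEq α] (u v : List α) : ℕ :=
  levenshtein Levenshtein.defaultCost u v

/- The alphabet `{1,…,16n} ∪ {a}` is modelled inside `ℕ`, with the special symbol
`a := 0` (distinct from all the integer symbols).  Indices of `α, β ∈ {0,1}^n` are
`0`-based. -/

/-- `α' ∈ {0,1}^{2n}` (0-based): `α'_{2j−1} = α_j`, `α'_{2j} = 1 − α_j`. -/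
def alphaP (a : ℕ → Bool) (j : ℕ) : Bool :=
  if j % 2 = 0 then a (j / 2) else !a (j / 2)

/-- `β' ∈ {0,1}^{2n}` (0-based): `β'_{2j−1} = 1 − β_j`, `β'_{2j} = β_j`. -/
def betaP (b : ℕ → Bool) (j : ℕ) : Bool :=
  if j % 2 = 0 then !b (j / 2) else b (j / 2)

/-- `x1 ∈ Σ^{4n}` : for `j ∈ {1,…,2n}`, the `(2j−1)`-th symbol is `3j−2` and the `(2j)`-th
symbol is `3j−1` if `α'_j = 1`, and `a` (here `0`) otherwise. -/
def x1 (n : ℕ) (a : ℕ → Bool) : List ℕ :=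
  ((List.range (2 * n)).map fun j =>
    [3 * (j + 1) - 2, if alphaP a j then 3 * (j + 1) - 1 else 0]).flatten

/-- `x2 ∈ Σ^{4n}` : for `j ∈ {1,…,2n}`, the `(2j−1)`-th symbol is `3j−1` if `β'_j = 1`
(and `a`, here `0`, otherwise), and the `(2j)`-th symbol is `3j`. -/
def x2 (n : ℕ) (b : ℕ → Bool) : List ℕ :=
  ((List.range (2 * n)).map fun j =>
    [if betaP b j then 3 * (j + 1) - 1 else 0, 3 * (j + 1)]).flatten

/-- `z = (6n+1, 6n+2, …, 16n)`. -/
def zstr (n : ℕ) : List ℕ := List.range' (6 * n + 1) (10 * n)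

/-- `ỹ = (1, 2, …, 16n) ∘ a^{2n}` (with `a := 0`). -/
def ytil (n : ℕ) : List ℕ := List.range' 1 (16 * n) ++ List.replicate (2 * n) 0

/-! ### Basic facts about the edit distance -/

section Basic
variable {α : Type*} [DecidableEq α]

lemma ED_nil_left (v : List α) : ED [] v = v.length := by
  induction v with
  | nil => simp [ED]
  | cons y ys ih => simp only [ED] at ih ⊢; simp [ih]; omega

lemma ED_nil_right (u : List α) : ED u [] = u.length := by
  induction u with
  | nil => simp [ED]
  | cons x xs ih => simp only [ED] at ih ⊢; simp [ih]; omega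

lemma ED_match (x : α) (u v : List α) : ED (x::u) (x::v) ≤ ED u v := by
  simp only [ED, levenshtein_cons_cons]
  refine le_trans (min_le_right _ _) (le_trans (min_le_right _ _) ?_)
  simp

lemma ED_subst (x y : α) (u v : List α) : ED (x::u) (y::v) ≤ 1 + ED u v := by
  simp only [ED, levenshtein_cons_cons]
  refine le_trans (min_le_right _ _) (le_trans (min_le_right _ _) ?_)
  simp only [Levenshtein.defaultCost_substitute]
  split <;> omega

lemma ED_ins (u : List α) (y : α) (v : List α) : ED u (y::v) ≤ 1 + ED u v := by
  cases u with
  | nil => simp [ED]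
  | cons x xs =>
    simp only [ED, levenshtein_cons_cons]
    refine le_trans (min_le_right _ _) (le_trans (min_le_left _ _) ?_)
    simp

lemma ED_del (x : α) (u v : List α) : ED (x::u) v ≤ 1 + ED u v := by
  cases v with
  | nil => simp [ED]
  | cons y ys =>
    simp only [ED, levenshtein_cons_cons]
    refine le_trans (min_le_left _ _) ?_
    simp

lemma ED_refl (u : List α) : ED u u = 0 := by
  induction u with
  | nil => simp [ED]
  | cons x xs ih => have := ED_match x xs xs; omega

lemma ED_le_max (u v : List α) : ED u v ≤ max u.length v.length := by
  induction u generalizing v with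
  | nil => simp [ED_nil_left]
  | cons x xs ih =>
    cases v with
    | nil => simp [ED_nil_right]
    | cons y ys =>
      have h1 := ED_subst x y xs ys
      have h2 := ih ys
      simp only [length_cons]
      omega

lemma ED_append (u₁ u₂ v₁ v₂ : List α) :
    ED (u₁ ++ u₂) (v₁ ++ v₂) ≤ ED u₁ v₁ + ED u₂ v₂ := by
  induction u₁ generalizing v₁ with
  | nil =>
    induction v₁ with
    | nil => simp [ED_refl]
    | cons y ys ihy =>
      have h1 := ED_ins u₂ y (ys ++ v₂)
      have h2 : ED ([] : List α) (y :: ys) = ys.length + 1 := by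
        rw [ED_nil_left]; simp
      rw [ED_nil_left] at ihy
      simp only [nil_append, cons_append] at *
      omega
  | cons x xs ihx =>
    induction v₁ with
    | nil =>
      have h1 := ED_del x (xs ++ u₂) v₂
      have h2 := ihx []
      rw [ED_nil_right] at h2 ⊢
      simp only [nil_append, cons_append] at *
      simp only [length_cons]
      omega
    | cons y ys ihy =>
      have hA := ihx (y :: ys)
      have hB := ihy
      have hC := ihx ys
      simp only [cons_append] at *
      have k1' : ED (x :: (xs ++ u₂)) (y :: (ys ++ v₂)) ≤ 1 + ED (xs ++ u₂) (y :: (ys ++ v₂)) :=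
        ED_del _ _ _
      have k1'' : ED (x :: (xs ++ u₂)) (y :: (ys ++ v₂)) ≤ 1 + ED (x :: (xs ++ u₂)) (ys ++ v₂) :=
        ED_ins _ _ _
      rcases eq_or_ne x y with rfl | hxy
      · have k1 : ED (x :: (xs ++ u₂)) (x :: (ys ++ v₂)) ≤ ED (xs ++ u₂) (ys ++ v₂) :=
          ED_match _ _ _
        have k2 : ED (x :: xs) (x :: ys) = min (1 + ED xs (x :: ys))
            (min (1 + ED (x :: xs) ys) (0 + ED xs ys)) := by
          simp [ED, levenshtein_cons_cons]
        omega
      · have k1 : ED (x :: (xs ++ u₂)) (y :: (ys ++ v₂)) ≤ 1 + ED (xs ++ u₂) (ys ++ v₂) :=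
          ED_subst _ _ _ _
        have k2 : ED (x :: xs) (y :: ys) = min (1 + ED xs (y :: ys))
            (min (1 + ED (x :: xs) ys) (1 + ED xs ys)) := by
          simp [ED, levenshtein_cons_cons, hxy]
        omega

lemma ED_ins_le {u v : List α} {y : α} {c : ℕ} (h : ED u v ≤ c) : ED u (y :: v) ≤ c + 1 := by
  have := ED_ins u y v; omega

lemma ED_sub_le {u v : List α} {x y : α} {c : ℕ} (h : ED u v ≤ c) :
    ED (x :: u) (y :: v) ≤ c + 1 := by
  have := ED_subst x y u v; omega

lemma ED_match_le {u v : List α} (x : α) {c : ℕ} (h : ED u v ≤ c) : ED (x :: u) (x :: v) ≤ c :=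
  le_trans (ED_match x u v) h

lemma ED_nil_le : ED ([] : List α) [] ≤ 0 := by simp [ED]

lemma chain1 (p1 p2 p3 p4 p5 p6 q : α) :
    ED [p1, p2, p4, q] [p1, p2, p3, p4, p5, p6] ≤ 3 := by
  have h : ED [p1, p2, p4, q] [p1, p2, p3, p4, p5, p6] ≤ 0 + 1 + 1 + 1 :=
    ED_match_le _ (ED_match_le _ (ED_ins_le (ED_match_le _ (ED_ins_le (ED_sub_le ED_nil_le)))))
  exact h.trans (by norm_num)

lemma chain2 (p1 p2 p3 p4 p5 p6 q : α) :
    ED [p1, q, p4, p5] [p1, p2, p3, p4, p5, p6] ≤ 3 := by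
  have h : ED [p1, q, p4, p5] [p1, p2, p3, p4, p5, p6] ≤ 0 + 1 + 1 + 1 :=
    ED_match_le _ (ED_sub_le (ED_ins_le (ED_match_le _ (ED_match_le _ (ED_ins_le ED_nil_le)))))
  exact h.trans (by norm_num)

lemma chain3 (p1 p2 p3 p4 p5 p6 q : α) :
    ED [q, p3, p5, p6] [p1, p2, p3, p4, p5, p6] ≤ 3 := by
  have h : ED [q, p3, p5, p6] [p1, p2, p3, p4, p5, p6] ≤ 0 + 1 + 1 + 1 :=
    ED_ins_le (ED_sub_le (ED_match_le _ (ED_ins_le (ED_match_le _ (ED_match_le _ ED_nil_le)))))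
  exact h.trans (by norm_num)

lemma chain4 (p1 p2 p3 p4 p5 p6 q : α) :
    ED [p2, p3, q, p6] [p1, p2, p3, p4, p5, p6] ≤ 3 := by
  have h : ED [p2, p3, q, p6] [p1, p2, p3, p4, p5, p6] ≤ 0 + 1 + 1 + 1 :=
    ED_ins_le (ED_match_le _ (ED_match_le _ (ED_sub_le (ED_ins_le (ED_match_le _ ED_nil_le)))))
  exact h.trans (by norm_num)

end Basic

/-! ### The blocks of `x1` and `x2` -/

def blkA (a : ℕ → Bool) (i : ℕ) : List ℕ :=
  [3 * (i + 1) - 2, if alphaP a i then 3 * (i + 1) - 1 else 0]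

def blkB (b : ℕ → Bool) (i : ℕ) : List ℕ :=
  [if betaP b i then 3 * (i + 1) - 1 else 0, 3 * (i + 1)]

lemma x1_eq (n : ℕ) (a : ℕ → Bool) :
    x1 n a = ((List.range (2 * n)).map (blkA a)).flatten := rfl

lemma x2_eq (n : ℕ) (b : ℕ → Bool) :
    x2 n b = ((List.range (2 * n)).map (blkB b)).flatten := rfl

lemma blkA_even (a : ℕ → Bool) (i : ℕ) :
    blkA a (2 * i) = [6 * i + 1, if a i then 6 * i + 2 else 0] := by
  have h1 : (2 * i) % 2 = 0 := by omega
  have h2 : (2 * i) / 2 = i := by omega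
  cases h : a i <;> simp [blkA, alphaP, h1, h2, h] <;> omega

lemma blkA_odd (a : ℕ → Bool) (i : ℕ) :
    blkA a (2 * i + 1) = [6 * i + 4, if a i then 0 else 6 * i + 5] := by
  have h1 : (2 * i + 1) % 2 = 1 := by omega
  have h2 : (2 * i + 1) / 2 = i := by omega
  cases h : a i <;> simp [blkA, alphaP, h1, h2, h] <;> omega

lemma blkB_even (b : ℕ → Bool) (i : ℕ) :
    blkB b (2 * i) = [if b i then 0 else 6 * i + 2, 6 * i + 3] := by
  have h1 : (2 * i) % 2 = 0 := by omega
  have h2 : (2 * i) / 2 = i := by omega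
  cases h : b i <;> simp [blkB, betaP, h1, h2, h] <;> omega

lemma blkB_odd (b : ℕ → Bool) (i : ℕ) :
    blkB b (2 * i + 1) = [if b i then 6 * i + 5 else 0, 6 * i + 6] := by
  have h1 : (2 * i + 1) % 2 = 1 := by omega
  have h2 : (2 * i + 1) / 2 = i := by omega
  cases h : b i <;> simp [blkB, betaP, h1, h2, h] <;> omega

lemma range'_two (s : ℕ) : List.range' s 2 = [s, s + 1] := rfl

lemma range'_two' (s : ℕ) : List.range' (s + 1) 2 = [s + 1, s + 2] := by
  simp [List.range'_succ, Nat.add_assoc]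

lemma range'_six' (s : ℕ) :
    List.range' (s + 1) 6 = [s + 1, s + 2, s + 3, s + 4, s + 5, s + 6] := by
  simp [List.range'_succ, Nat.add_assoc]

lemma range'_split (st k c : ℕ) :
    List.range' st (k + c) = List.range' st k ++ List.range' (st + k) c := by
  have h := @List.range'_append st k c 1
  rw [one_mul] at h
  rw [← h]

lemma flatten_len2 (f : ℕ → List ℕ) (hf : ∀ i, (f i).length = 2) (l : List ℕ) :
    ((l.map f).flatten).length = 2 * l.length := by
  induction l with
  | nil => simp
  | cons i t ih => simp [hf, ih]; omega

lemma pairA (a : ℕ → Bool) (s : ℕ) :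
    ED ((List.range' (2 * s) 2).map (blkA a)).flatten (List.range' (6 * s + 1) 6) ≤ 3 := by
  rw [range'_two, range'_six']
  simp only [List.map_cons, List.map_nil, List.flatten_cons, List.flatten_nil,
    List.append_nil, blkA_even, blkA_odd, List.cons_append, List.nil_append]
  cases h : a s <;> simp only [h, if_true, if_false, Bool.false_eq_true]
  · exact chain2 _ _ _ _ _ _ _
  · exact chain1 _ _ _ _ _ _ _

lemma pairB (b : ℕ → Bool) (s : ℕ) :
    ED ((List.range' (2 * s) 2).map (blkB b)).flatten (List.range' (6 * s + 1) 6) ≤ 3 := by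
  rw [range'_two, range'_six']
  simp only [List.map_cons, List.map_nil, List.flatten_cons, List.flatten_nil,
    List.append_nil, blkB_even, blkB_odd, List.cons_append, List.nil_append]
  cases h : b s <;> simp only [h, if_true, if_false, Bool.false_eq_true]
  · exact chain4 _ _ _ _ _ _ _
  · exact chain3 _ _ _ _ _ _ _

lemma sumA (a : ℕ → Bool) (m : ℕ) : ∀ s : ℕ,
    ED (((List.range' (2 * s) (2 * m)).map (blkA a)).flatten) (List.range' (6 * s + 1) (6 * m)) ≤
      3 * m := by
  induction m with
  | zero => intro s; simp [ED]
  | succ m ih =>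
    intro s
    rw [show 2 * (m + 1) = 2 + 2 * m from by ring, range'_split,
      show 2 * s + 2 = 2 * (s + 1) from by ring,
      show 6 * (m + 1) = 6 + 6 * m from by ring, range'_split,
      show 6 * s + 1 + 6 = 6 * (s + 1) + 1 from by ring,
      List.map_append, List.flatten_append]
    have h1 := pairA a s
    have h2 := ih (s + 1)
    have h3 := ED_append (((List.range' (2 * s) 2).map (blkA a)).flatten)
      (((List.range' (2 * (s + 1)) (2 * m)).map (blkA a)).flatten)
      (List.range' (6 * s + 1) 6) (List.range' (6 * (s + 1) + 1) (6 * m))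
    omega

lemma sumB (b : ℕ → Bool) (m : ℕ) : ∀ s : ℕ,
    ED (((List.range' (2 * s) (2 * m)).map (blkB b)).flatten) (List.range' (6 * s + 1) (6 * m)) ≤
      3 * m := by
  induction m with
  | zero => intro s; simp [ED]
  | succ m ih =>
    intro s
    rw [show 2 * (m + 1) = 2 + 2 * m from by ring, range'_split,
      show 2 * s + 2 = 2 * (s + 1) from by ring,
      show 6 * (m + 1) = 6 + 6 * m from by ring, range'_split,
      show 6 * s + 1 + 6 = 6 * (s + 1) + 1 from by ring,
      List.map_append, List.flatten_append]
    have h1 := pairB b s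
    have h2 := ih (s + 1)
    have h3 := ED_append (((List.range' (2 * s) 2).map (blkB b)).flatten)
      (((List.range' (2 * (s + 1)) (2 * m)).map (blkB b)).flatten)
      (List.range' (6 * s + 1) 6) (List.range' (6 * (s + 1) + 1) (6 * m))
    omega

/-- With `x̃1 = x1` and `x̃2 = x2 ∘ z`: if there exists an index
`j ∈ {1,…,n}` with `α_j = β_j = 1`, then `ED(x̃1 ∘ x̃2, ỹ) ≤ 9n − 3`. -/
theorem stmt17 (n : ℕ) (hn : 0 < n) (a b : ℕ → Bool)
    (h : ∃ j < n, a j = true ∧ b j = true) :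
    ED (x1 n a ++ (x2 n b ++ zstr n)) (ytil n) ≤ 9 * n - 3 := by
  obtain ⟨j, hj, haj, hbj⟩ := h
  obtain ⟨m, rfl⟩ : ∃ m, n = j + m + 1 := ⟨n - j - 1, by omega⟩
  -- decompose x1
  have hx1 : x1 (j + m + 1) a =
      ((List.range' 0 (2 * j)).map (blkA a)).flatten ++
        (blkA a (2 * j) ++ ((List.range' (2 * j + 1) (2 * m + 1)).map (blkA a)).flatten) := by
    rw [x1_eq, List.range_eq_range',
      show 2 * (j + m + 1) = 2 * j + (1 + (2 * m + 1)) from by ring,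
      range'_split, range'_split]
    simp [List.range'_one, Nat.zero_add]
  -- decompose x2
  have hx2 : x2 (j + m + 1) b =
      ((List.range' 0 (2 * j + 1)).map (blkB b)).flatten ++
        (blkB b (2 * j + 1) ++ ((List.range' (2 * j + 2) (2 * m)).map (blkB b)).flatten) := by
    rw [x2_eq, List.range_eq_range',
      show 2 * (j + m + 1) = (2 * j + 1) + (1 + 2 * m) from by ring,
      range'_split 0 (2 * j + 1) (1 + 2 * m), range'_split (0 + (2 * j + 1)) 1 (2 * m)]
    simp [List.range'_one, Nat.zero_add, show 2 * j + 1 + 1 = 2 * j + 2 from rfl]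
  -- decompose y
  have hy : ytil (j + m + 1) =
      List.range' 1 (6 * j) ++
        (List.range' (6 * j + 1) 2 ++
          (List.range' (6 * j + 3) 2 ++
            (List.range' (6 * j + 5) 2 ++
              (List.range' (6 * j + 7) (6 * m) ++
                (zstr (j + m + 1) ++ List.replicate (2 * (j + m + 1)) 0))))) := by
    rw [ytil, zstr,
      show 16 * (j + m + 1) = 6 * j + (2 + (2 + (2 + (6 * m + 10 * (j + m + 1))))) from by ring,
      range'_split, range'_split, range'_split, range'_split, range'_split,
      show (1 : ℕ) + 6 * j = 6 * j + 1 from by ring,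
      show 6 * j + 1 + 2 = 6 * j + 3 from by ring,
      show 6 * j + 3 + 2 = 6 * j + 5 from by ring,
      show 6 * j + 5 + 2 = 6 * j + 7 from by ring,
      show 6 * j + 7 + 6 * m = 6 * (j + m + 1) + 1 from by ring]
    simp [List.append_assoc]
  -- the seven component bounds
  have c1 : ED (((List.range' 0 (2 * j)).map (blkA a)).flatten) (List.range' 1 (6 * j)) ≤ 3 * j := by
    have := sumA a j 0
    norm_num at this
    exact this
  have c2 : ED (blkA a (2 * j)) (List.range' (6 * j + 1) 2) ≤ 0 := by
    rw [blkA_even, haj, if_pos rfl, range'_two']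
    simp [ED_refl]
  have c3 : ED (((List.range' (2 * j + 1) (2 * m + 1)).map (blkA a)).flatten ++
        ((List.range' 0 (2 * j + 1)).map (blkB b)).flatten)
      (List.range' (6 * j + 3) 2) ≤ 4 * (j + m + 1) := by
    refine le_trans (ED_le_max _ _) ?_
    have l1 : (((List.range' (2 * j + 1) (2 * m + 1)).map (blkA a)).flatten).length
        = 2 * (2 * m + 1) := by
      rw [flatten_len2 (blkA a) (fun i => rfl)]; simp
    have l2 : (((List.range' 0 (2 * j + 1)).map (blkB b)).flatten).length
        = 2 * (2 * j + 1) := by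
      rw [flatten_len2 (blkB b) (fun i => rfl)]; simp
    simp only [List.length_append, l1, l2, List.length_range']
    omega
  have c4 : ED (blkB b (2 * j + 1)) (List.range' (6 * j + 5) 2) ≤ 0 := by
    rw [blkB_odd, hbj, if_pos rfl, range'_two,
      show 6 * j + 5 + 1 = 6 * j + 6 from rfl]
    simp [ED_refl]
  have c5 : ED (((List.range' (2 * j + 2) (2 * m)).map (blkB b)).flatten)
      (List.range' (6 * j + 7) (6 * m)) ≤ 3 * m := by
    have := sumB b m (j + 1)
    rw [show 2 * (j + 1) = 2 * j + 2 from by ring,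
      show 6 * (j + 1) + 1 = 6 * j + 7 from by ring] at this
    exact this
  have c6 : ED (zstr (j + m + 1)) (zstr (j + m + 1)) ≤ 0 := le_of_eq (ED_refl _)
  have c7 : ED ([] : List ℕ) (List.replicate (2 * (j + m + 1)) 0) ≤ 2 * (j + m + 1) := by
    rw [ED_nil_left, List.length_replicate]
  -- assemble
  rw [hx1, hx2, hy]
  have hu : (((List.range' 0 (2 * j)).map (blkA a)).flatten ++
        (blkA a (2 * j) ++ ((List.range' (2 * j + 1) (2 * m + 1)).map (blkA a)).flatten)) ++
      ((((List.range' 0 (2 * j + 1)).map (blkB b)).flatten ++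
        (blkB b (2 * j + 1) ++ ((List.range' (2 * j + 2) (2 * m)).map (blkB b)).flatten)) ++
        zstr (j + m + 1)) =
      ((List.range' 0 (2 * j)).map (blkA a)).flatten ++
        (blkA a (2 * j) ++
          ((((List.range' (2 * j + 1) (2 * m + 1)).map (blkA a)).flatten ++
              ((List.range' 0 (2 * j + 1)).map (blkB b)).flatten) ++
            (blkB b (2 * j + 1) ++
              (((List.range' (2 * j + 2) (2 * m)).map (blkB b)).flatten ++
                (zstr (j + m + 1) ++ ([] : List ℕ)))))) := by
    simp [List.append_assoc]
  rw [hu]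
  refine le_trans (ED_append _ _ _ _) ?_
  have t2 := ED_append (blkA a (2 * j))
    ((((List.range' (2 * j + 1) (2 * m + 1)).map (blkA a)).flatten ++
        ((List.range' 0 (2 * j + 1)).map (blkB b)).flatten) ++
      (blkB b (2 * j + 1) ++
        (((List.range' (2 * j + 2) (2 * m)).map (blkB b)).flatten ++
          (zstr (j + m + 1) ++ ([] : List ℕ)))))
    (List.range' (6 * j + 1) 2)
    (List.range' (6 * j + 3) 2 ++
      (List.range' (6 * j + 5) 2 ++
        (List.range' (6 * j + 7) (6 * m) ++
          (zstr (j + m + 1) ++ List.replicate (2 * (j + m + 1)) 0))))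
  have t3 := ED_append ((((List.range' (2 * j + 1) (2 * m + 1)).map (blkA a)).flatten ++
        ((List.range' 0 (2 * j + 1)).map (blkB b)).flatten))
    (blkB b (2 * j + 1) ++
      (((List.range' (2 * j + 2) (2 * m)).map (blkB b)).flatten ++
        (zstr (j + m + 1) ++ ([] : List ℕ))))
    (List.range' (6 * j + 3) 2)
    (List.range' (6 * j + 5) 2 ++
      (List.range' (6 * j + 7) (6 * m) ++
        (zstr (j + m + 1) ++ List.replicate (2 * (j + m + 1)) 0)))
  have t4 := ED_append (blkB b (2 * j + 1))
    (((List.range' (2 * j + 2) (2 * m)).map (blkB b)).flatten ++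
      (zstr (j + m + 1) ++ ([] : List ℕ)))
    (List.range' (6 * j + 5) 2)
    (List.range' (6 * j + 7) (6 * m) ++
      (zstr (j + m + 1) ++ List.replicate (2 * (j + m + 1)) 0))
  have t5 := ED_append (((List.range' (2 * j + 2) (2 * m)).map (blkB b)).flatten)
    (zstr (j + m + 1) ++ ([] : List ℕ))
    (List.range' (6 * j + 7) (6 * m))
    (zstr (j + m + 1) ++ List.replicate (2 * (j + m + 1)) 0)
  have t6 := ED_append (zstr (j + m + 1)) ([] : List ℕ)
    (zstr (j + m + 1)) (List.replicate (2 * (j + m + 1)) 0)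
  omega
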